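/- Let n ∈ ℕ, with 1-digit blocks [a_i, b_i] as above (ε_j(n)=1 iff a_i ≤ j ≤ b_i for some i, and b_i+1 < a_{i+1}). Define H_n^{(1)}(t) = w_n(t) Σ_{j=2}^{|n|} ε_j(n)(D_{2^{j+1}}(t) − D_{2^j}(t)) l_{n(j-1)}. Then for every k and every t ∈ B_k := (2^{-(b_k+2)}, 2^{-(b_k+1)}), one has |H_n^{(1)}(t)| = Σ_{i=1}^{k} Σ_{j=a_i}^{b_i} 2^j l_{n(j-1)} ≥ 2^{b_k} l_{n(b_k-1)}. -/

import Mathlib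

open MeasureTheory Finset Filter Set

noncomputable section

/-- `k`-th binary digit of `x ∈ [0,1)`. -/
def xdigit (k : ℕ) (x : ℝ) : ℕ := ⌊x * 2 ^ (k + 1)⌋.toNat % 2

/-- Rademacher function `ρ_k(x) = (-1)^{x_k}`. -/
def rademacher (k : ℕ) (x : ℝ) : ℝ := (-1 : ℝ) ^ xdigit k x

/-- `j`-th binary digit of the natural number `n`. -/
def eps (j n : ℕ) : ℕ := n / 2 ^ j % 2

/-- Walsh-Paley function `w_n(x) = ∏_k ρ_k(x)^{n_k}`. -/
def walsh (n : ℕ) (x : ℝ) : ℝ := ∏ k ∈ Finset.range (n + 1), rademacher k x ^ eps k n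

/-- Walsh-Dirichlet kernel `D_n(x) = ∑_{m<n} w_m(x)`. -/
def Dker (n : ℕ) (x : ℝ) : ℝ := ∑ m ∈ Finset.range n, walsh m x

/-- `l_m = ∑_{k=1}^{m-1} 1/k`. -/
def lsum (m : ℕ) : ℝ := ∑ k ∈ Finset.Ico 1 m, (1 : ℝ) / k

/-- Logarithmic variation `V_L(n)`; note `n(k-1) = n % 2^k`. -/
def VL (n : ℕ) : ℝ :=
  (1 / (Nat.log 2 n : ℝ)) *
    ∑ k ∈ Finset.Icc 1 (Nat.log 2 n),
      |(eps k n : ℝ) - (eps (k + 1) n : ℝ)| * lsum (n % 2 ^ k)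

lemma eps_eq_zero_of_lt {k n : ℕ} (h : n < 2 ^ k) : eps k n = 0 := by
  simp [eps, Nat.div_eq_of_lt h]

lemma walsh_eq_prod {n M : ℕ} (h : n < 2 ^ M) (x : ℝ) :
    walsh n x = ∏ k ∈ Finset.range M, rademacher k x ^ eps k n := by
  unfold walsh
  rcases le_total (n + 1) M with h1 | h1
  · refine Finset.prod_subset (Finset.range_subset_range.2 h1) fun kk _ hkk => ?_
    have hk : ¬ kk < n + 1 := fun hc => hkk (Finset.mem_range.mpr hc)
    have : n < 2 ^ kk :=
      lt_of_lt_of_le (Nat.lt_two_pow_self (n := n)) (Nat.pow_le_pow_right (by norm_num) (by omega))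
    simp [eps_eq_zero_of_lt this]
  · refine (Finset.prod_subset (Finset.range_subset_range.2 h1) fun kk _ hkk => ?_).symm
    have hk : ¬ kk < M := fun hc => hkk (Finset.mem_range.mpr hc)
    have : n < 2 ^ kk := lt_of_lt_of_le h (Nat.pow_le_pow_right (by norm_num) (by omega))
    simp [eps_eq_zero_of_lt this]

lemma eps_add_pow {k m r : ℕ} (hk : k < m) : eps k (2 ^ m + r) = eps k r := by
  unfold eps
  have hm : k + (m - k) = m := by omega
  have h1 : 2 ^ m + r = 2 ^ k * 2 ^ (m - k) + r := by rw [← pow_add, hm]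
  rw [h1, Nat.mul_add_div (pow_pos (by norm_num) k)]
  have h2 : 2 ^ (m - k) = 2 * 2 ^ (m - k - 1) := by
    rw [← pow_succ']; congr 1; omega
  omega

lemma eps_self_add {m r : ℕ} (hr : r < 2 ^ m) : eps m (2 ^ m + r) = 1 := by
  unfold eps
  rw [Nat.add_div_left _ (pow_pos (by norm_num) m), Nat.div_eq_of_lt hr]

lemma Dker_two_pow (m : ℕ) (x : ℝ) :
    Dker (2 ^ m) x = ∏ k ∈ Finset.range m, (1 + rademacher k x) := by
  induction m with
  | zero => simp [Dker, walsh, eps]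
  | succ m ih =>
    have h2 : 2 ^ (m + 1) = 2 ^ m + 2 ^ m := by ring
    rw [Finset.prod_range_succ, ← ih]
    unfold Dker
    rw [h2, Finset.sum_range_add]
    have hterm : ∀ r ∈ Finset.range (2 ^ m),
        walsh (2 ^ m + r) x = rademacher m x * walsh r x := by
      intro r hr
      rw [Finset.mem_range] at hr
      rw [walsh_eq_prod (show 2 ^ m + r < 2 ^ (m + 1) by omega) x, walsh_eq_prod hr x,
        Finset.prod_range_succ, eps_self_add hr, pow_one]
      rw [Finset.prod_congr rfl fun kk hkk =>
        by rw [eps_add_pow (Finset.mem_range.mp hkk)]]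
      ring
    rw [Finset.sum_congr rfl hterm, ← Finset.mul_sum]
    ring

lemma xdigit_zero {k : ℕ} {x : ℝ} (hx0 : 0 ≤ x) (hx : x < ((2:ℝ) ^ (k + 1))⁻¹) :
    xdigit k x = 0 := by
  have h2 : (0:ℝ) < 2 ^ (k + 1) := by positivity
  have hf : ⌊x * 2 ^ (k + 1)⌋ = 0 := by
    rw [Int.floor_eq_zero_iff]
    constructor
    · positivity
    · rw [inv_eq_one_div, lt_div_iff₀ h2] at hx
      simpa using hx
  simp [xdigit, hf]

lemma Dker_val {m : ℕ} {x : ℝ} (hx0 : 0 ≤ x) (hx : x < ((2:ℝ) ^ m)⁻¹) :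
    Dker (2 ^ m) x = 2 ^ m := by
  rw [Dker_two_pow]
  have hfac : ∀ kk ∈ Finset.range m, (1 + rademacher kk x) = 2 := by
    intro kk hkk
    rw [Finset.mem_range] at hkk
    have hle : ((2:ℝ) ^ m)⁻¹ ≤ ((2:ℝ) ^ (kk + 1))⁻¹ := by
      apply inv_anti₀ (by positivity)
      exact pow_le_pow_right₀ (by norm_num) (by omega)
    rw [rademacher, xdigit_zero hx0 (lt_of_lt_of_le hx hle)]
    norm_num
  rw [Finset.prod_congr rfl hfac, Finset.prod_const, Finset.card_range]

lemma Dker_zero {m kk : ℕ} {x : ℝ} (hkk : kk < m) (hd : xdigit kk x = 1) :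
    Dker (2 ^ m) x = 0 := by
  rw [Dker_two_pow]
  exact Finset.prod_eq_zero (Finset.mem_range.mpr hkk) (by simp [rademacher, hd])

lemma abs_walsh (n : ℕ) (x : ℝ) : |walsh n x| = 1 := by
  rw [walsh, Finset.abs_prod]
  have hfac : ∀ kk ∈ Finset.range (n + 1), |rademacher kk x ^ eps kk n| = 1 := by
    intro kk _
    rw [abs_pow, rademacher, abs_pow, abs_neg, abs_one, one_pow, one_pow]
  rw [Finset.prod_congr rfl hfac, Finset.prod_const, one_pow]

lemma lsum_nonneg (m : ℕ) : 0 ≤ lsum m :=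
  Finset.sum_nonneg fun kk _ => by positivity

lemma chain {s : ℕ} {a b : ℕ → ℕ} (hab : ∀ i ∈ Finset.Icc 1 s, a i ≤ b i)
    (hba : ∀ i ∈ Finset.Icc 1 (s - 1), b i + 1 < a (i + 1)) :
    ∀ i' i, 1 ≤ i → i < i' → i' ≤ s → b i < a i' := by
  intro i'
  induction i' with
  | zero => omega
  | succ m ih =>
    intro i h1 h2 h3
    rcases eq_or_lt_of_le (Nat.lt_succ_iff.mp h2) with rfl | hlt
    · have := hba i (Finset.mem_Icc.mpr ⟨h1, by omega⟩); omega
    · have h4 : b i < a m := ih i h1 hlt (by omega)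
      have h5 : a m ≤ b m := hab m (Finset.mem_Icc.mpr ⟨by omega, by omega⟩)
      have h6 := hba m (Finset.mem_Icc.mpr ⟨by omega, by omega⟩)
      omega

/-- on `B_k = (2^{-(b_k+2)}, 2^{-(b_k+1)})` one has
`|H_n^{(1)}(t)| = ∑_{i=1}^{k} ∑_{j=a_i}^{b_i} 2^j l_{n(j-1)} ≥ 2^{b_k} l_{n(b_k-1)}`,
where `H_n^{(1)}(t) = w_n(t) ∑_{j=2}^{|n|} ε_j(n)(D_{2^{j+1}}(t) - D_{2^j}(t)) l_{n(j-1)}`. -/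
theorem statement8 (n s : ℕ) (hs : 1 ≤ s) (a b : ℕ → ℕ)
    (hab : ∀ i ∈ Finset.Icc 1 s, a i ≤ b i)
    (ha2 : 2 ≤ a 1)
    (hba : ∀ i ∈ Finset.Icc 1 (s - 1), b i + 1 < a (i + 1))
    (hdig : ∀ j : ℕ, 2 ≤ j → (eps j n = 1 ↔ ∃ i ∈ Finset.Icc 1 s, a i ≤ j ∧ j ≤ b i))
    (k : ℕ) (hk : k ∈ Finset.Icc 1 s) (t : ℝ)
    (ht : t ∈ Set.Ioo (((2 : ℝ) ^ (b k + 2))⁻¹) (((2 : ℝ) ^ (b k + 1))⁻¹)) :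
    |walsh n t * ∑ j ∈ Finset.Icc 2 (Nat.log 2 n),
        (eps j n : ℝ) * (Dker (2 ^ (j + 1)) t - Dker (2 ^ j) t) * lsum (n % 2 ^ j)| =
      ∑ i ∈ Finset.Icc 1 k, ∑ j ∈ Finset.Icc (a i) (b i), (2 : ℝ) ^ j * lsum (n % 2 ^ j) ∧
    (2 : ℝ) ^ b k * lsum (n % 2 ^ b k) ≤
      ∑ i ∈ Finset.Icc 1 k, ∑ j ∈ Finset.Icc (a i) (b i), (2 : ℝ) ^ j * lsum (n % 2 ^ j) := by
  obtain ⟨hk1, hks⟩ := Finset.mem_Icc.mp hk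
  obtain ⟨ht1, ht2⟩ := ht
  have hchain := chain hab hba
  have ht0 : 0 < t := lt_trans (by positivity) ht1
  set B := b k with hB
  set L := Nat.log 2 n with hL
  -- the (B+1)-st digit of t equals 1
  have hd1 : xdigit (B + 1) t = 1 := by
    have hp2 : (0:ℝ) < 2 ^ (B + 2) := by positivity
    have hp1 : (0:ℝ) < 2 ^ (B + 1) := by positivity
    have h1 : (1:ℝ) < t * 2 ^ (B + 2) := by
      rw [inv_eq_one_div, div_lt_iff₀ hp2] at ht1
      linarith
    have h2 : t * 2 ^ (B + 2) < 2 := by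
      rw [inv_eq_one_div, lt_div_iff₀ hp1] at ht2
      have he : (2:ℝ) ^ (B + 2) = 2 ^ (B + 1) * 2 := by ring
      nlinarith
    have hf : ⌊t * 2 ^ (B + 1 + 1)⌋ = 1 := by
      rw [show B + 1 + 1 = B + 2 from rfl, Int.floor_eq_iff]
      constructor
      · push_cast; linarith
      · push_cast; linarith
    simp [xdigit, hf]
  have hDle : ∀ j : ℕ, j ≤ B → Dker (2 ^ (j + 1)) t - Dker (2 ^ j) t = 2 ^ j := by
    intro j hj
    have e1 : t < ((2:ℝ) ^ (j + 1))⁻¹ := lt_of_lt_of_le ht2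
      (inv_anti₀ (by positivity) (pow_le_pow_right₀ (by norm_num) (by omega)))
    have e2 : t < ((2:ℝ) ^ j)⁻¹ := lt_of_lt_of_le ht2
      (inv_anti₀ (by positivity) (pow_le_pow_right₀ (by norm_num) (by omega)))
    rw [Dker_val ht0.le e1, Dker_val ht0.le e2]
    ring
  have hDzero : ∀ j : ℕ, B + 2 ≤ j → Dker (2 ^ (j + 1)) t - Dker (2 ^ j) t = 0 := by
    intro j hj
    rw [Dker_zero (show B + 1 < j + 1 by omega) hd1,
      Dker_zero (show B + 1 < j by omega) hd1, sub_zero]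
  have ha2' : ∀ i, 1 ≤ i → i ≤ s → 2 ≤ a i := by
    intro i h1 h2
    rcases eq_or_lt_of_le h1 with h | hlt
    · rw [← h]; exact ha2
    · have hc := hchain i 1 le_rfl hlt h2
      have hc2 := hab 1 (Finset.mem_Icc.mpr ⟨le_rfl, hs⟩)
      omega
  set T := (Finset.Icc 1 k).biUnion (fun i => Finset.Icc (a i) (b i)) with hT
  have hepsT : ∀ j ∈ T, eps j n = 1 := by
    intro j hj
    rw [hT, Finset.mem_biUnion] at hj
    obtain ⟨i, hi, hji⟩ := hj
    rw [Finset.mem_Icc] at hi hji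
    exact (hdig j (le_trans (ha2' i hi.1 (le_trans hi.2 hks)) hji.1)).mpr
      ⟨i, Finset.mem_Icc.mpr ⟨hi.1, le_trans hi.2 hks⟩, hji.1, hji.2⟩
  have hTsub : T ⊆ Finset.Icc 2 L := by
    intro j hj
    have he := hepsT j hj
    rw [hT, Finset.mem_biUnion] at hj
    obtain ⟨i, hi, hji⟩ := hj
    rw [Finset.mem_Icc] at hi hji
    have h2j : 2 ≤ j := le_trans (ha2' i hi.1 (le_trans hi.2 hks)) hji.1
    have hpow : 2 ^ j ≤ n := by
      have h1 : n / 2 ^ j % 2 = 1 := he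
      have h2 : 1 ≤ n / 2 ^ j :=
        Nat.one_le_iff_ne_zero.mpr (fun hz => by rw [hz] at h1; simp at h1)
      calc 2 ^ j = 1 * 2 ^ j := (one_mul _).symm
        _ ≤ n := (Nat.le_div_iff_mul_le (pow_pos (by norm_num) j)).mp h2
    have hn0 : n ≠ 0 := by
      intro h; rw [h] at hpow
      exact absurd hpow (Nat.not_le.mpr (pow_pos (by norm_num) j))
    exact Finset.mem_Icc.mpr ⟨h2j, (Nat.le_log_iff_pow_le (by norm_num) hn0).mpr hpow⟩
  have hjB : ∀ j ∈ T, j ≤ B := by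
    intro j hj
    rw [hT, Finset.mem_biUnion] at hj
    obtain ⟨i, hi, hji⟩ := hj
    rw [Finset.mem_Icc] at hi hji
    rcases eq_or_lt_of_le hi.2 with h | hlt
    · rw [h] at hji; omega
    · have := hchain k i hi.1 hlt hks
      have := hab k (Finset.mem_Icc.mpr ⟨hk1, hks⟩)
      omega
  have hval : ∀ j ∈ T,
      (eps j n : ℝ) * (Dker (2 ^ (j + 1)) t - Dker (2 ^ j) t) * lsum (n % 2 ^ j)
        = (2:ℝ) ^ j * lsum (n % 2 ^ j) := by
    intro j hj
    rw [hepsT j hj, hDle j (hjB j hj)]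
    push_cast; ring
  have hzero : ∀ j ∈ Finset.Icc 2 L, j ∉ T →
      (eps j n : ℝ) * (Dker (2 ^ (j + 1)) t - Dker (2 ^ j) t) * lsum (n % 2 ^ j) = 0 := by
    intro j hjL hjT
    rw [Finset.mem_Icc] at hjL
    rcases Nat.mod_two_eq_zero_or_one (n / 2 ^ j) with h0 | h1
    · rw [show eps j n = 0 from h0]; push_cast; ring
    · obtain ⟨i, hi, hji1, hji2⟩ := (hdig j hjL.1).mp h1
      rw [Finset.mem_Icc] at hi
      have hik : k < i := by
        by_contra hc
        push_neg at hc
        exact hjT (Finset.mem_biUnion.mpr ⟨i, Finset.mem_Icc.mpr ⟨hi.1, hc⟩,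
          Finset.mem_Icc.mpr ⟨hji1, hji2⟩⟩)
      have hBa : B + 2 ≤ a i := by
        have h6 := hba k (Finset.mem_Icc.mpr ⟨hk1, by omega⟩)
        rcases eq_or_lt_of_le (Nat.succ_le_of_lt hik) with h | hlt
        · have h6' : b k + 1 < a i := h ▸ h6
          omega
        · have h7 := hchain i (k + 1) (by omega) hlt hi.2
          have h8 := hab (k + 1) (Finset.mem_Icc.mpr ⟨by omega, by omega⟩)
          omega
      rw [hDzero j (by omega)]
      ring
  have hsum : ∑ j ∈ Finset.Icc 2 L,
      (eps j n : ℝ) * (Dker (2 ^ (j + 1)) t - Dker (2 ^ j) t) * lsum (n % 2 ^ j)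
        = ∑ j ∈ T, (2:ℝ) ^ j * lsum (n % 2 ^ j) := by
    rw [← Finset.sum_subset hTsub hzero]
    exact Finset.sum_congr rfl hval
  have hdisj : (↑(Finset.Icc 1 k) : Set ℕ).PairwiseDisjoint
      (fun i => Finset.Icc (a i) (b i)) := by
    intro i hi i' hi' hne
    rw [Finset.coe_Icc, Set.mem_Icc] at hi hi'
    rw [Function.onFun, Finset.disjoint_left]
    intro j hj hj'
    rw [Finset.mem_Icc] at hj hj'
    rcases lt_or_gt_of_ne hne with h | h
    · have := hchain i' i hi.1 h (le_trans hi'.2 hks); omega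
    · have := hchain i i' hi'.1 h (le_trans hi.2 hks); omega
  have hRHS : ∑ i ∈ Finset.Icc 1 k, ∑ j ∈ Finset.Icc (a i) (b i),
      (2:ℝ) ^ j * lsum (n % 2 ^ j) = ∑ j ∈ T, (2:ℝ) ^ j * lsum (n % 2 ^ j) :=
    (Finset.sum_biUnion hdisj).symm
  have htnn : ∀ j : ℕ, 0 ≤ (2:ℝ) ^ j * lsum (n % 2 ^ j) :=
    fun j => mul_nonneg (by positivity) (lsum_nonneg _)
  have hSnn : 0 ≤ ∑ j ∈ T, (2:ℝ) ^ j * lsum (n % 2 ^ j) :=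
    Finset.sum_nonneg fun j _ => htnn j
  have hBT : B ∈ T := Finset.mem_biUnion.mpr
    ⟨k, Finset.mem_Icc.mpr ⟨hk1, le_rfl⟩,
      Finset.mem_Icc.mpr ⟨hab k (Finset.mem_Icc.mpr ⟨hk1, hks⟩), le_rfl⟩⟩
  constructor
  · rw [abs_mul, abs_walsh, one_mul, hsum, hRHS, abs_of_nonneg hSnn]
  · rw [hRHS]
    exact Finset.single_le_sum (fun j _ => htnn j) hBT
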